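/- arXiv:2208.09790 — 5 statements merged into one kernel-verified Lean document; each statement's English description precedes it below -/
import Mathlib

section
/- Let T be a natural number. For each s ∈ {1,...,T}, let Γ : X → Set U have nonempty compact values and be L_Γ-Lipschitz in the Hausdorff metric: hausdorffDist(Γ(x), Γ(x')) ≤ L_Γ · ‖x − x'‖ for all x, x'; let f_s : X → U → W_s → X satisfy ‖f_s(x,u,w) − f_s(x',u',w)‖ ≤ ‖x − x'‖ + ‖u − u'‖ for all x,x',u,u',w; let c_s ∈ ℝ^q and μ_s a probability mass function on the finite set W_s. Define v_{T+1} ≡ 0 and v_s(x) = inf_{u ∈ Γ(x)} ( c_s·u + Σ_{w ∈ W_s} μ_s(w) · v_{s+1}(f_s(x,u,w)) ). Define constants by L_{T+1} = 0 and L_s = ‖c_s‖₁ · L_Γ + L_{s+1} · (1 + L_Γ). Then for every s ∈ {1,...,T+1}, v_s is Lipschitz continuous with Lipschitz constant L_s. -/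
/-- Lipschitz continuity of the value functions of the EV-charging dynamic program:
if `Γ` is `L_Γ`-Lipschitz in the Hausdorff metric and the transitions are jointly
nonexpansive (`‖f(x,u,w) − f(x',u',w)‖ ≤ ‖x−x'‖ + ‖u−u'‖`), then `v s` is Lipschitz
with constant `L s` given by `L (T+1) = 0`, `L s = ‖c_s‖₁ L_Γ + L (s+1) (1 + L_Γ)`. -/
theorem stmt3 (p q T : ℕ)
    (W : ℕ → Type) [∀ s, Fintype (W s)]
    (μ : ∀ s, W s → ℝ)
    (hμ0 : ∀ s w, 0 ≤ μ s w)
    (hμ1 : ∀ s, ∑ w, μ s w = 1)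
    (Γ : ℕ → (Fin p → ℝ) → Set (Fin q → ℝ))
    (hΓne : ∀ s x, (Γ s x).Nonempty)
    (hΓcpt : ∀ s x, IsCompact (Γ s x))
    (LΓ : ℝ) (hLΓ : 0 ≤ LΓ)
    (hΓlip : ∀ s (x x' : Fin p → ℝ),
      Metric.hausdorffDist (Γ s x) (Γ s x') ≤ LΓ * ‖x - x'‖)
    (f : ∀ s, (Fin p → ℝ) → (Fin q → ℝ) → W s → (Fin p → ℝ))
    (hf : ∀ s (x x' : Fin p → ℝ) (u u' : Fin q → ℝ) w,
      ‖f s x u w - f s x' u' w‖ ≤ ‖x - x'‖ + ‖u - u'‖)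
    (c : ℕ → Fin q → ℝ)
    (v : ℕ → (Fin p → ℝ) → ℝ)
    (hvT : ∀ x, v (T + 1) x = 0)
    (hv : ∀ s, 1 ≤ s → s ≤ T → ∀ x,
      v s x = sInf ((fun u => (∑ i, c s i * u i) +
        ∑ w, μ s w * v (s + 1) (f s x u w)) '' Γ s x))
    (L : ℕ → ℝ)
    (hLT : L (T + 1) = 0)
    (hL : ∀ s, 1 ≤ s → s ≤ T → L s = (∑ i, |c s i|) * LΓ + L (s + 1) * (1 + LΓ)) :
    ∀ s, 1 ≤ s → s ≤ T + 1 → ∀ x x' : Fin p → ℝ,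
      |v s x - v s x'| ≤ L s * ‖x - x'‖ := by
  -- nonnegativity of L
  have hc0 : ∀ s, (0:ℝ) ≤ ∑ i, |c s i| := fun s =>
    Finset.sum_nonneg fun i _ => abs_nonneg _
  have hL0 : ∀ n s, s + n = T + 1 → 1 ≤ s → 0 ≤ L s := by
    intro n
    induction n with
    | zero =>
      intro s hs _
      have : s = T + 1 := by omega
      rw [this, hLT]
    | succ n ih =>
      intro s hs h1
      have hsT : s ≤ T := by omega
      rw [hL s h1 hsT]
      have h2 := ih (s + 1) (by omega) (by omega)
      have := hc0 s
      nlinarith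
  -- key one-step lemma
  have key : ∀ s, 1 ≤ s → s ≤ T →
      (∀ x x', |v (s+1) x - v (s+1) x'| ≤ L (s+1) * ‖x - x'‖) →
      ∀ x x', |v s x - v s x'| ≤ L s * ‖x - x'‖ := by
    intro s h1 hsT IH
    have hL1 : 0 ≤ L (s+1) := hL0 (T - s) (s+1) (by omega) (by omega)
    have hvlip : LipschitzWith (Real.toNNReal (L (s+1))) (v (s+1)) := by
      apply LipschitzWith.of_dist_le_mul
      intro a b
      rw [Real.dist_eq, dist_eq_norm, Real.coe_toNNReal _ hL1]
      exact IH a b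
    have hcont : ∀ y, Continuous (fun u : Fin q → ℝ =>
        (∑ i, c s i * u i) + ∑ w, μ s w * v (s+1) (f s y u w)) := by
      intro y
      apply Continuous.add
      · exact continuous_finset_sum _ fun i _ => continuous_const.mul (continuous_apply i)
      · apply continuous_finset_sum
        intro w _
        apply Continuous.mul continuous_const
        apply hvlip.continuous.comp
        have : LipschitzWith 1 (fun u : Fin q → ℝ => f s y u w) := by
          apply LipschitzWith.of_dist_le_mul
          intro a b
          rw [dist_eq_norm, dist_eq_norm, NNReal.coe_one, one_mul]
          have := hf s y y a b w
          simpa using this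
        exact this.continuous
    set g : (Fin p → ℝ) → (Fin q → ℝ) → ℝ := fun y u =>
      (∑ i, c s i * u i) + ∑ w, μ s w * v (s+1) (f s y u w) with hg
    have oneside : ∀ x x', v s x - v s x' ≤ L s * ‖x - x'‖ := by
      intro x x'
      obtain ⟨u', hu'mem, hu'min⟩ :=
        (hΓcpt s x').exists_isMinOn (hΓne s x') (hcont x').continuousOn
      -- find nearby point in Γ s x
      have hne : EMetric.hausdorffEdist (Γ s x') (Γ s x) ≠ ⊤ :=
        Metric.hausdorffEdist_ne_top_of_nonempty_of_bounded (hΓne s x') (hΓne s x)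
          (hΓcpt s x').isBounded (hΓcpt s x).isBounded
      have hinf : Metric.infDist u' (Γ s x) ≤ LΓ * ‖x - x'‖ := by
        calc Metric.infDist u' (Γ s x)
            ≤ Metric.hausdorffDist (Γ s x') (Γ s x) :=
              Metric.infDist_le_hausdorffDist_of_mem hu'mem hne
          _ ≤ LΓ * ‖x' - x‖ := hΓlip s x' x
          _ = LΓ * ‖x - x'‖ := by rw [norm_sub_rev]
      obtain ⟨u, humem, hudist⟩ :=
        (hΓcpt s x).exists_infDist_eq_dist (hΓne s x) u'
      have huu' : ‖u - u'‖ ≤ LΓ * ‖x - x'‖ := by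
        rw [← dist_eq_norm, dist_comm]
        rw [hudist] at hinf
        exact hinf
      -- v s x ≤ g x u
      have hvx : v s x ≤ g x u := by
        rw [hv s h1 hsT x]
        exact csInf_le ((hΓcpt s x).bddBelow_image (hcont x).continuousOn)
          ⟨u, humem, rfl⟩
      -- g x' u' ≤ v s x'
      have hvx' : g x' u' ≤ v s x' := by
        rw [hv s h1 hsT x']
        apply le_csInf ((hΓne s x').image _)
        rintro b ⟨z, hz, rfl⟩
        exact hu'min hz
      -- bound g x u - g x' u'
      have hlin : |(∑ i, c s i * u i) - ∑ i, c s i * u' i|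
          ≤ (∑ i, |c s i|) * ‖u - u'‖ := by
        rw [← Finset.sum_sub_distrib, Finset.sum_mul]
        refine (Finset.abs_sum_le_sum_abs _ _).trans (Finset.sum_le_sum ?_)
        intro i _
        rw [← mul_sub, abs_mul]
        apply mul_le_mul_of_nonneg_left _ (abs_nonneg _)
        have := norm_le_pi_norm (u - u') i
        simpa [Real.norm_eq_abs] using this
      have hsum : (∑ w, μ s w * v (s+1) (f s x u w))
            - ∑ w, μ s w * v (s+1) (f s x' u' w)
          ≤ L (s+1) * (‖x - x'‖ + ‖u - u'‖) := by
        rw [← Finset.sum_sub_distrib]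
        have : ∀ w : W s, μ s w * v (s+1) (f s x u w) - μ s w * v (s+1) (f s x' u' w)
            ≤ μ s w * (L (s+1) * (‖x - x'‖ + ‖u - u'‖)) := by
          intro w
          rw [← mul_sub]
          apply mul_le_mul_of_nonneg_left _ (hμ0 s w)
          calc v (s+1) (f s x u w) - v (s+1) (f s x' u' w)
              ≤ |v (s+1) (f s x u w) - v (s+1) (f s x' u' w)| := le_abs_self _
            _ ≤ L (s+1) * ‖f s x u w - f s x' u' w‖ := IH _ _
            _ ≤ L (s+1) * (‖x - x'‖ + ‖u - u'‖) :=
                mul_le_mul_of_nonneg_left (hf s x x' u u' w) hL1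
        calc (∑ w, (μ s w * v (s+1) (f s x u w) - μ s w * v (s+1) (f s x' u' w)))
            ≤ ∑ w, μ s w * (L (s+1) * (‖x - x'‖ + ‖u - u'‖)) :=
              Finset.sum_le_sum fun w _ => this w
          _ = L (s+1) * (‖x - x'‖ + ‖u - u'‖) := by
              rw [← Finset.sum_mul, hμ1 s, one_mul]
      have hgbound : g x u - g x' u'
          ≤ (∑ i, |c s i|) * ‖u - u'‖ + L (s+1) * (‖x - x'‖ + ‖u - u'‖) := by
        have h1' := (abs_le.mp hlin).2
        simp only [hg]
        linarith [h1', hsum]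
      have hcs := hc0 s
      have hnx : (0:ℝ) ≤ ‖x - x'‖ := norm_nonneg _
      rw [hL s h1 hsT]
      nlinarith [huu', hgbound, hvx, hvx']
    intro x x'
    rw [abs_sub_le_iff]
    constructor
    · exact oneside x x'
    · have := oneside x' x
      rwa [norm_sub_rev] at this
  -- main downward induction
  have main : ∀ n s, s + n = T + 1 → 1 ≤ s → ∀ x x',
      |v s x - v s x'| ≤ L s * ‖x - x'‖ := by
    intro n
    induction n with
    | zero =>
      intro s hs _ x x'
      have : s = T + 1 := by omega
      subst this
      rw [hvT x, hvT x', hLT]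
      simp
    | succ n ih =>
      intro s hs h1 x x'
      exact key s h1 (by omega) (ih (s+1) (by omega) (by omega)) x x'
  intro s h1 h2
  exact main (T + 1 - s) s (by omega) h1
end

section
/- Let Q₁ be a real a×q matrix, Q₂ a real a×p matrix, Q₃ a real b×q matrix, and Q₄ a real b×p matrix. For x ∈ ℝ^p define the polyhedral correspondence Γ(x) = { u ∈ ℝ^q | u ≥ 0, Q₁u ≤ Q₂x, Q₃u = Q₄x } (inequalities componentwise). Then there exists a constant L ≥ 0 such that for all x, x' ∈ ℝ^p with Γ(x) and Γ(x') both nonempty, the Hausdorff extended distance satisfies hausdorffEdist(Γ(x), Γ(x')) ≤ L · ‖x − x'‖. -/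
open Finset

/-- Carathéodory for cones: a nonnegative combination over `t` can be rewritten as a
nonnegative combination over a subset `s ⊆ t` whose vectors are linearly independent. -/
theorem cone_caratheodory {E : Type*} [AddCommGroup E] [Module ℝ E] {ι : Type*} [DecidableEq ι]
    (a : ι → E) (t : Finset ι) (l : ι → ℝ) (hl : ∀ i ∈ t, 0 ≤ l i) :
    ∃ s : Finset ι, s ⊆ t ∧ LinearIndependent ℝ (fun i : ↥s => a ↑i) ∧
      ∃ m : ι → ℝ, (∀ i ∈ s, 0 ≤ m i) ∧ ∑ i ∈ s, m i • a i = ∑ i ∈ t, l i • a i := by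
  induction t using Finset.strongInduction generalizing l with
  | _ t ih =>
    by_cases hind : LinearIndependent ℝ (fun i : ↥t => a ↑i)
    · exact ⟨t, subset_rfl, hind, l, hl, rfl⟩
    · -- get a nontrivial vanishing combination
      rw [Fintype.not_linearIndependent_iff] at hind
      obtain ⟨g, hg0, j, hgj⟩ := hind
      set ν : ι → ℝ := fun i => if h : i ∈ t then g ⟨i, h⟩ else 0 with hν
      have hνsum : ∑ i ∈ t, ν i • a i = 0 := by
        rw [← Finset.sum_attach t (fun i => ν i • a i), ← hg0]
        refine Finset.sum_congr rfl fun i _ => ?_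
        simp [hν, i.2]
      have hνj : ν (j : ι) ≠ 0 := by simpa [hν, j.2] using hgj
      have hjmem : (j : ι) ∈ t := j.2
      -- WLOG some positive coefficient
      have key : ∀ ν : ι → ℝ, (∑ i ∈ t, ν i • a i = 0) → ∀ j ∈ t, 0 < ν j →
          ∃ s : Finset ι, s ⊆ t ∧ LinearIndependent ℝ (fun i : ↥s => a ↑i) ∧
          ∃ m : ι → ℝ, (∀ i ∈ s, 0 ≤ m i) ∧ ∑ i ∈ s, m i • a i = ∑ i ∈ t, l i • a i := by
        intro ν hνsum j hj hνjpos
        set P : Finset ι := t.filter (fun i => 0 < ν i) with hP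
        have hPne : P.Nonempty := ⟨j, by simp [hP, hj, hνjpos]⟩
        obtain ⟨i₀, hi₀P, hi₀min⟩ := Finset.exists_mem_eq_inf' hPne (fun i => l i / ν i)
        have hi₀t : i₀ ∈ t := (Finset.mem_filter.mp hi₀P).1
        have hi₀pos : 0 < ν i₀ := (Finset.mem_filter.mp hi₀P).2
        set θ : ℝ := l i₀ / ν i₀ with hθ
        have hθ0 : 0 ≤ θ := div_nonneg (hl _ hi₀t) hi₀pos.le
        set m : ι → ℝ := fun i => l i - θ * ν i with hm
        have hm0 : ∀ i ∈ t, 0 ≤ m i := by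
          intro i hi
          by_cases hνi : 0 < ν i
          · have : θ ≤ l i / ν i := hi₀min ▸ Finset.inf'_le _ (Finset.mem_filter.mpr ⟨hi, hνi⟩)
            have := mul_le_mul_of_nonneg_right this hνi.le
            rw [div_mul_cancel₀ _ hνi.ne'] at this
            simpa [hm] using sub_nonneg.mpr this
          · have : θ * ν i ≤ 0 := mul_nonpos_of_nonneg_of_nonpos hθ0 (not_lt.mp hνi)
            have := sub_nonneg.mpr (this.trans (hl i hi))
            simp only [hm]
            nlinarith [hl i hi]
        have hmi₀ : m i₀ = 0 := by
          simp [hm, hθ, div_mul_cancel₀ _ hi₀pos.ne']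
        have hmsum : ∑ i ∈ t, m i • a i = ∑ i ∈ t, l i • a i := by
          simp only [hm, sub_smul, mul_smul, Finset.sum_sub_distrib, ← Finset.smul_sum, hνsum,
            smul_zero, sub_zero]
        have hsum' : ∑ i ∈ t.erase i₀, m i • a i = ∑ i ∈ t, l i • a i := by
          rw [← hmsum, ← Finset.add_sum_erase t _ hi₀t, hmi₀, zero_smul, zero_add]
        obtain ⟨s, hs, hsind, m', hm', hm'sum⟩ :=
          ih (t.erase i₀) (Finset.erase_ssubset hi₀t) m (fun i hi => hm0 i (Finset.mem_of_mem_erase hi))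
        exact ⟨s, hs.trans (Finset.erase_subset _ _), hsind, m', hm', by rw [hm'sum, hsum']⟩
      rcases lt_or_gt_of_ne hνj with hneg | hpos
      · refine key (fun i => -ν i) ?_ j hjmem (neg_pos.mpr hneg)
        have : ∑ i ∈ t, (-ν i) • a i = -∑ i ∈ t, ν i • a i := by
          rw [← Finset.sum_neg_distrib]; exact Finset.sum_congr rfl fun i _ => neg_smul _ _
        rw [this, hνsum, neg_zero]
      · exact key ν hνsum j hjmem hpos

open Finset

section Cone

variable {E : Type*} [NormedAddCommGroup E] [NormedSpace ℝ E]
variable {ι : Type*} [DecidableEq ι]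

/-- The cone of nonnegative combinations of `a i`, `i ∈ t`. -/
def coneOf (a : ι → E) (t : Finset ι) : Set E :=
  {y | ∃ l : ι → ℝ, (∀ i ∈ t, 0 ≤ l i) ∧ y = ∑ i ∈ t, l i • a i}

theorem coneOf_mono (a : ι → E) {s t : Finset ι} (hst : s ⊆ t) :
    coneOf a s ⊆ coneOf a t := by
  rintro y ⟨l, hl, rfl⟩
  classical
  refine ⟨fun i => if i ∈ s then l i else 0, fun i _ => ?_, ?_⟩
  · dsimp only; split
    · exact hl _ ‹_›
    · exact le_refl 0
  · rw [← Finset.sum_subset hst (fun i _ hi => by simp [hi])]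
    exact Finset.sum_congr rfl fun i hi => by simp [hi]

/-- The linear map sending coefficients to the corresponding combination. -/
def combMap (a : ι → E) (s : Finset ι) : ((↥s → ℝ)) →ₗ[ℝ] E where
  toFun l := ∑ i : ↥s, l i • a ↑i
  map_add' l l' := by simp [add_smul, Finset.sum_add_distrib]
  map_smul' c l := by simp [Finset.smul_sum, smul_smul]

theorem coneOf_eq_image (a : ι → E) (s : Finset ι) :
    coneOf a s = combMap a s '' {l | ∀ i, 0 ≤ l i} := by
  ext y
  constructor
  · rintro ⟨l, hl, rfl⟩
    refine ⟨fun i => l ↑i, fun i => hl _ i.2, ?_⟩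
    show ∑ i : ↥s, l ↑i • a ↑i = _
    rw [← Finset.sum_attach s (fun i => l i • a i)]
    rfl
  · rintro ⟨l, hl, rfl⟩
    classical
    refine ⟨fun i => if h : i ∈ s then l ⟨i, h⟩ else 0, fun i hi => by simp [hi, hl _], ?_⟩
    show _ = ∑ i ∈ s, (if h : i ∈ s then l ⟨i, h⟩ else 0) • a i
    rw [← Finset.sum_attach s (fun i => (if h : i ∈ s then l ⟨i, h⟩ else 0) • a i)]
    exact Finset.sum_congr rfl fun i _ => by simp [i.2]

theorem coneOf_isClosed_of_indep [CompleteSpace E] (a : ι → E) (s : Finset ι)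
    (hind : LinearIndependent ℝ (fun i : ↥s => a ↑i)) : IsClosed (coneOf a s) := by
  rw [coneOf_eq_image]
  have hinj : Function.Injective (combMap a s) := by
    intro l l' h
    have : combMap a s (l - l') = 0 := by
      rw [map_sub, h, sub_self]
    have h0 : ∑ i : ↥s, (l - l') i • a ↑i = 0 := this
    have := Fintype.linearIndependent_iff.mp hind (l - l') h0
    funext i
    have := this i
    simpa [sub_eq_zero] using this
  obtain ⟨K, -, hK⟩ := (combMap a s).injective_iff_antilipschitz.mp hinj
  have hfc : UniformContinuous (combMap a s) :=
    (combMap a s).toContinuousLinearMap.uniformContinuous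
  have hemb := hK.isClosedEmbedding hfc
  exact hemb.isClosedMap _ (isClosed_Ici (a := (0 : ↥s → ℝ)))

theorem coneOf_isClosed [CompleteSpace E] (a : ι → E) (t : Finset ι) :
    IsClosed (coneOf a t) := by
  classical
  have hdecomp : coneOf a t =
      ⋃ s ∈ t.powerset, ⋃ (_ : LinearIndependent ℝ (fun i : ↥s => a ↑i)), coneOf a s := by
    ext y
    simp only [Set.mem_iUnion, Finset.mem_coe, Finset.mem_powerset]
    constructor
    · rintro ⟨l, hl, rfl⟩
      obtain ⟨s, hst, hind, m, hm, hsum⟩ := cone_caratheodory a t l hl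
      exact ⟨s, hst, hind, m, hm, hsum.symm⟩
    · rintro ⟨s, hst, -, hy⟩
      exact coneOf_mono a hst hy
  rw [hdecomp]
  refine Set.Finite.isClosed_biUnion (Finset.finite_toSet _) fun s _ => ?_
  rw [Set.iUnion_eq_if]
  split
  · exact coneOf_isClosed_of_indep a s ‹_›
  · exact isClosed_empty

end Cone
section Farkas

open Finset RealInnerProductSpace

variable {E : Type*} [NormedAddCommGroup E] [InnerProductSpace ℝ E] [FiniteDimensional ℝ E]
variable {ι : Type*} [DecidableEq ι]

/-- Farkas' lemma: if `⟪y, d⟫ ≤ 0` whenever `⟪a i, d⟫ ≤ 0` for all `i ∈ t`,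
then `y` is a nonnegative combination of the `a i`, `i ∈ t`. -/
theorem farkas_mem_coneOf (a : ι → E) (t : Finset ι) (y : E)
    (h : ∀ d : E, (∀ i ∈ t, ⟪a i, d⟫ ≤ 0) → ⟪y, d⟫ ≤ 0) : y ∈ coneOf a t := by
  set K : ConvexCone ℝ E :=
    { carrier := coneOf a t
      smul_mem' := by
        rintro c hc x ⟨l, hl, rfl⟩
        refine ⟨fun i => c * l i, fun i hi => mul_nonneg hc.le (hl i hi), ?_⟩
        rw [Finset.smul_sum]
        exact Finset.sum_congr rfl fun i _ => by rw [smul_smul]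
      add_mem' := by
        rintro x ⟨l, hl, rfl⟩ x' ⟨l', hl', rfl⟩
        refine ⟨l + l', fun i hi => add_nonneg (hl i hi) (hl' i hi), ?_⟩
        rw [← Finset.sum_add_distrib]
        exact Finset.sum_congr rfl fun i _ => by simp [add_smul] } with hK
  by_contra hy
  have hne : (K : Set E).Nonempty := ⟨0, ⟨0, by simp, by simp⟩⟩
  have hcl : IsClosed (K : Set E) := coneOf_isClosed a t
  obtain ⟨d, hd1, hd2⟩ :=
    ProperCone.hyperplane_separation' (C := ⟨K.toPointedCone (show (0:E) ∈ K from ⟨0, by simp, by simp⟩), hcl⟩) (x₀ := y) hy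
  have hmem : ∀ i ∈ t, a i ∈ (K : Set E) := by
    intro i hi
    refine ⟨fun j => if j = i then 1 else 0, fun j _ => by positivity, ?_⟩
    have : ∀ j ∈ t, (if j = i then (1:ℝ) else 0) • a j = if j = i then a j else 0 := by
      intro j _; split <;> simp
    rw [Finset.sum_congr rfl this, Finset.sum_ite_eq' t i a]
    simp [hi]
  have := h (-d) (fun i hi => by
    have := hd1 (a i) (hmem i hi)
    rw [inner_neg_right]
    linarith)
  rw [inner_neg_right] at this
  have : 0 ≤ ⟪y, d⟫ := by linarith
  rw [real_inner_comm] at this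
  linarith

/-- Coefficient bound for linearly independent combinations. -/
theorem comb_coeff_bound (a : ι → E) (s : Finset ι) :
    ∃ C : ℝ, 0 ≤ C ∧ (LinearIndependent ℝ (fun i : ↥s => a ↑i) →
      ∀ m : ι → ℝ, ∑ i ∈ s, |m i| ≤ C * ‖∑ i ∈ s, m i • a i‖) := by
  by_cases hind : LinearIndependent ℝ (fun i : ↥s => a ↑i)
  swap
  · exact ⟨0, le_refl 0, fun h => absurd h hind⟩
  have hinj : Function.Injective (combMap a s) := by
    intro l l' hll
    have h0 : ∑ i : ↥s, (l - l') i • a ↑i = 0 := by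
      have : combMap a s (l - l') = 0 := by rw [map_sub, hll, sub_self]
      exact this
    have := Fintype.linearIndependent_iff.mp hind (l - l') h0
    funext i
    simpa [sub_eq_zero] using this i
  obtain ⟨Kc, hKpos, hK⟩ := (combMap a s).injective_iff_antilipschitz.mp hinj
  refine ⟨s.card * Kc, by positivity, fun _ m => ?_⟩
  set l : ↥s → ℝ := fun i => m ↑i with hl
  have hcomb : combMap a s l = ∑ i ∈ s, m i • a i := by
    show ∑ i : ↥s, m ↑i • a ↑i = _
    rw [← Finset.sum_attach s (fun i => m i • a i)]
    rfl
  have hnorm : ‖l‖ ≤ Kc * ‖∑ i ∈ s, m i • a i‖ := by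
    have := hK.le_mul_dist l 0
    simpa [dist_eq_norm, hcomb] using this
  have hsum : ∑ i ∈ s, |m i| ≤ (s.card : ℝ) * ‖l‖ := by
    rw [← Finset.sum_attach s (fun i => |m i|)]
    calc ∑ i : ↥s, |m ↑i| ≤ ∑ _i : ↥s, ‖l‖ := by
          refine Finset.sum_le_sum fun i _ => ?_
          simpa [hl] using norm_le_pi_norm l i
      _ = (s.card : ℝ) * ‖l‖ := by simp [mul_comm]
  calc ∑ i ∈ s, |m i| ≤ (s.card : ℝ) * ‖l‖ := hsum
    _ ≤ (s.card : ℝ) * (Kc * ‖∑ i ∈ s, m i • a i‖) := by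
        refine mul_le_mul_of_nonneg_left hnorm (by positivity)
    _ = (s.card : ℝ) * Kc * ‖∑ i ∈ s, m i • a i‖ := by ring

end Farkas
section Hoffman

open Finset RealInnerProductSpace

/-- Hoffman-type error bound: there is a constant `H` depending only on the vectors `a i`
such that any point whose residuals w.r.t. the system `⟪a i, ·⟫ ≤ c i` are at most `r`
is within `H * r` of the (nonempty) solution set. -/
theorem hoffman_bound {ι : Type*} [Fintype ι] {E : Type*} [NormedAddCommGroup E]
    [InnerProductSpace ℝ E] [FiniteDimensional ℝ E] (a : ι → E) :
    ∃ H : ℝ, 0 ≤ H ∧ ∀ (c : ι → ℝ) (v : E) (r : ℝ), 0 ≤ r →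
      (∀ i, ⟪a i, v⟫ - c i ≤ r) → {u : E | ∀ i, ⟪a i, u⟫ ≤ c i}.Nonempty →
      ∃ w : E, (∀ i, ⟪a i, w⟫ ≤ c i) ∧ ‖v - w‖ ≤ H * r := by
  classical
  choose C hC0 hC using comb_coeff_bound a
  set H : ℝ := (Finset.univ : Finset (Finset ι)).sup' ⟨∅, Finset.mem_univ _⟩ C with hH
  have hHC : ∀ s : Finset ι, C s ≤ H := fun s => Finset.le_sup' C (Finset.mem_univ s)
  have hH0 : 0 ≤ H := (hC0 ∅).trans (hHC ∅)
  refine ⟨H, hH0, fun c v r hr hres hne => ?_⟩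
  set S := {u : E | ∀ i, ⟪a i, u⟫ ≤ c i} with hS
  have hconv : Convex ℝ S := by
    intro x hx y hy α β hα hβ hab i
    have h1 := hx i; have h2 := hy i
    calc ⟪a i, α • x + β • y⟫ = α * ⟪a i, x⟫ + β * ⟪a i, y⟫ := by
          rw [inner_add_right, real_inner_smul_right, real_inner_smul_right]
      _ ≤ α * c i + β * c i := by
          exact add_le_add (mul_le_mul_of_nonneg_left h1 hα) (mul_le_mul_of_nonneg_left h2 hβ)
      _ = c i := by rw [← add_mul, hab, one_mul]
  have hclosed : IsClosed S := by
    have : S = ⋂ i, {u : E | ⟪a i, u⟫ ≤ c i} := by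
      ext u; simp [hS, Set.mem_iInter]
    rw [this]
    exact isClosed_iInter fun i =>
      isClosed_le (Continuous.inner continuous_const continuous_id) continuous_const
  obtain ⟨w, hwS, hwmin⟩ :=
    exists_norm_eq_iInf_of_complete_convex hne hclosed.isComplete hconv v
  have hinner : ∀ z ∈ S, ⟪v - w, z - w⟫ ≤ 0 :=
    (norm_eq_iInf_iff_real_inner_le_zero hconv hwS).mp hwmin
  set J : Finset ι := Finset.univ.filter (fun i => ⟪a i, w⟫ = c i) with hJ
  -- Farkas: `v - w` lies in the cone of active rows
  have hcone : v - w ∈ coneOf a J := by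
    refine farkas_mem_coneOf a J _ (fun d hd => ?_)
    set T : Finset ι := Finset.univ.filter (fun i => ⟪a i, w⟫ ≠ c i) with hT
    set ε : ℝ := if hTne : T.Nonempty then
        min 1 (T.inf' hTne fun i => (c i - ⟪a i, w⟫) / (|⟪a i, d⟫| + 1)) else 1 with hε
    have hεpos : 0 < ε := by
      rw [hε]
      split
      · refine lt_min one_pos ?_
        rw [Finset.lt_inf'_iff]
        intro i hi
        have hlt : ⟪a i, w⟫ < c i :=
          lt_of_le_of_ne (hwS i) ((Finset.mem_filter.mp hi).2)
        have : (0:ℝ) < |⟪a i, d⟫| + 1 := by positivity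
        exact div_pos (by linarith) this
      · exact one_pos
    have hmem : w + ε • d ∈ S := by
      intro i
      rw [inner_add_right, real_inner_smul_right]
      by_cases hact : ⟪a i, w⟫ = c i
      · have hdle : ⟪a i, d⟫ ≤ 0 :=
          hd i (Finset.mem_filter.mpr ⟨Finset.mem_univ _, hact⟩)
        nlinarith
      · have hiT : i ∈ T := Finset.mem_filter.mpr ⟨Finset.mem_univ _, hact⟩
        have hTne : T.Nonempty := ⟨i, hiT⟩
        have hεle : ε ≤ (c i - ⟪a i, w⟫) / (|⟪a i, d⟫| + 1) := by
          rw [hε, dif_pos hTne]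
          exact (min_le_right _ _).trans (Finset.inf'_le _ hiT)
        have habs : ⟪a i, d⟫ ≤ |⟪a i, d⟫| := le_abs_self _
        have hpos : (0:ℝ) < |⟪a i, d⟫| + 1 := by positivity
        have hmul : ε * (|⟪a i, d⟫| + 1) ≤ c i - ⟪a i, w⟫ :=
          (le_div_iff₀ hpos).mp hεle
        nlinarith [abs_nonneg (⟪a i, d⟫)]
    have := hinner _ hmem
    rw [add_sub_cancel_left, real_inner_smul_right] at this
    by_contra hcon
    push_neg at hcon
    nlinarith [mul_pos hεpos hcon]
  obtain ⟨l, hl, hlsum⟩ := hcone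
  obtain ⟨s, hsJ, hsind, m, hm, hmsum⟩ := cone_caratheodory a J l hl
  have hvw : v - w = ∑ i ∈ s, m i • a i := by rw [hmsum, ← hlsum]
  -- bound ‖v - w‖²
  have hsq : ‖v - w‖ ^ 2 ≤ (∑ i ∈ s, m i) * r := by
    have : ‖v - w‖ ^ 2 = ∑ i ∈ s, m i * ⟪a i, v - w⟫ := by
      rw [← real_inner_self_eq_norm_sq]
      nth_rewrite 1 [hvw]
      rw [sum_inner]
      exact Finset.sum_congr rfl fun i _ => real_inner_smul_left _ _ _
    rw [this, Finset.sum_mul]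
    refine Finset.sum_le_sum fun i hi => ?_
    have hact : ⟪a i, w⟫ = c i := (Finset.mem_filter.mp (hsJ hi)).2
    have : ⟪a i, v - w⟫ = ⟪a i, v⟫ - c i := by rw [inner_sub_right, hact]
    rw [this]
    exact mul_le_mul_of_nonneg_left (hres i) (hm i hi)
  have hcoeff : ∑ i ∈ s, m i ≤ H * ‖v - w‖ := by
    calc ∑ i ∈ s, m i ≤ ∑ i ∈ s, |m i| := Finset.sum_le_sum fun i _ => le_abs_self _
      _ ≤ C s * ‖∑ i ∈ s, m i • a i‖ := hC s hsind m
      _ = C s * ‖v - w‖ := by rw [← hvw]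
      _ ≤ H * ‖v - w‖ := mul_le_mul_of_nonneg_right (hHC s) (norm_nonneg _)
  refine ⟨w, hwS, ?_⟩
  rcases le_or_gt ‖v - w‖ 0 with hvw0 | hvw0
  · exact hvw0.trans (by positivity)
  · have h1 : ‖v - w‖ ^ 2 ≤ H * ‖v - w‖ * r :=
      hsq.trans (mul_le_mul_of_nonneg_right hcoeff hr)
    nlinarith

end Hoffman
section Assembly

open Finset RealInnerProductSpace Matrix

/-- The sup norm is at most the Euclidean norm. -/
theorem sup_norm_le_euclid {n : ℕ} (z : EuclideanSpace ℝ (Fin n)) :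
    ‖WithLp.equiv 2 (Fin n → ℝ) z‖ ≤ ‖z‖ := by
  rw [pi_norm_le_iff_of_nonneg (norm_nonneg z)]
  intro j
  show ‖z j‖ ≤ _
  rw [Real.norm_eq_abs, ← Real.sqrt_sq_eq_abs (z j), EuclideanSpace.norm_eq]
  apply Real.sqrt_le_sqrt
  calc z j ^ 2 = ‖z j‖ ^ 2 := by rw [Real.norm_eq_abs, sq_abs]
    _ ≤ ∑ i, ‖z i‖ ^ 2 := Finset.single_le_sum (f := fun i => ‖z i‖ ^ 2) (fun i _ => by positivity) (Finset.mem_univ j)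

theorem row_bound {m n : ℕ} (M : Matrix (Fin m) (Fin n) ℝ) (i : Fin m) (z : Fin n → ℝ) :
    |M.mulVec z i| ≤ (∑ j, |M i j|) * ‖z‖ := by
  rw [Matrix.mulVec, dotProduct]
  calc |∑ j, M i j * z j| ≤ ∑ j, |M i j * z j| := Finset.abs_sum_le_sum_abs _ _
    _ ≤ ∑ j, |M i j| * ‖z‖ := by
        refine Finset.sum_le_sum fun j _ => ?_
        rw [abs_mul]
        refine mul_le_mul_of_nonneg_left ?_ (abs_nonneg _)
        simpa [Real.norm_eq_abs] using norm_le_pi_norm z j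
    _ = (∑ j, |M i j|) * ‖z‖ := by rw [Finset.sum_mul]

/-- Lipschitz continuity (in Hausdorff distance) of the polyhedral correspondence
`Γ(x) = {u | u ≥ 0, Q₁u ≤ Q₂x, Q₃u = Q₄x}` (Walkup–Wets/Hoffman-type bound): there
is a constant `L ≥ 0` with `hausdorffEdist (Γ x) (Γ x') ≤ L‖x − x'‖` whenever both
sets are nonempty. -/
theorem stmt5 (p q a b : ℕ)
    (Q1 : Matrix (Fin a) (Fin q) ℝ) (Q2 : Matrix (Fin a) (Fin p) ℝ)
    (Q3 : Matrix (Fin b) (Fin q) ℝ) (Q4 : Matrix (Fin b) (Fin p) ℝ) :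
    ∃ L : ℝ, 0 ≤ L ∧ ∀ x x' : Fin p → ℝ,
      ({u : Fin q → ℝ | 0 ≤ u ∧ Q1.mulVec u ≤ Q2.mulVec x ∧
          Q3.mulVec u = Q4.mulVec x}).Nonempty →
      ({u : Fin q → ℝ | 0 ≤ u ∧ Q1.mulVec u ≤ Q2.mulVec x' ∧
          Q3.mulVec u = Q4.mulVec x'}).Nonempty →
      EMetric.hausdorffEdist
          {u : Fin q → ℝ | 0 ≤ u ∧ Q1.mulVec u ≤ Q2.mulVec x ∧
            Q3.mulVec u = Q4.mulVec x}
          {u : Fin q → ℝ | 0 ≤ u ∧ Q1.mulVec u ≤ Q2.mulVec x' ∧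
            Q3.mulVec u = Q4.mulVec x'}
        ≤ ENNReal.ofReal (L * ‖x - x'‖) := by
  classical
  set ι : Type := (Fin q ⊕ Fin a) ⊕ (Fin b ⊕ Fin b) with hι
  set A : ι → EuclideanSpace ℝ (Fin q) := fun i =>
    match i with
    | .inl (.inl j) => WithLp.toLp 2 (fun k => if k = j then (-1:ℝ) else 0)
    | .inl (.inr i) => WithLp.toLp 2 (fun k => Q1 i k)
    | .inr (.inl i) => WithLp.toLp 2 (fun k => Q3 i k)
    | .inr (.inr i) => WithLp.toLp 2 (fun k => -(Q3 i k)) with hA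
  set cvec : (Fin p → ℝ) → ι → ℝ := fun x i =>
    match i with
    | .inl (.inl _) => 0
    | .inl (.inr i) => Q2.mulVec x i
    | .inr (.inl i) => Q4.mulVec x i
    | .inr (.inr i) => -(Q4.mulVec x i) with hcvec
  have hinner : ∀ (z : EuclideanSpace ℝ (Fin q)) (u : Fin q → ℝ),
      ⟪z, ((WithLp.equiv 2 (Fin q → ℝ)).symm u)⟫ = ∑ k, z k * u k := by
    intro z u
    rw [PiLp.inner_apply]
    exact Finset.sum_congr rfl fun k _ => by
      simp [RCLike.inner_apply, mul_comm]
  -- membership characterization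
  have hmem : ∀ (x : Fin p → ℝ) (u : Fin q → ℝ),
      (0 ≤ u ∧ Q1.mulVec u ≤ Q2.mulVec x ∧ Q3.mulVec u = Q4.mulVec x)
        ↔ ∀ i : ι, ⟪A i, ((WithLp.equiv 2 (Fin q → ℝ)).symm u)⟫ ≤ cvec x i := by
    intro x u
    constructor
    · rintro ⟨h0, h1, h2⟩ i
      match i with
      | .inl (.inl j) =>
          rw [hinner]
          have : ∑ k, (if k = j then (-1:ℝ) else 0) * u k = -u j := by
            simp [ite_mul]
          simpa [hA, hcvec, this] using h0 j
      | .inl (.inr i) =>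
          rw [hinner]
          simpa [hA, hcvec, Matrix.mulVec, dotProduct] using h1 i
      | .inr (.inl i) =>
          rw [hinner]
          have := congrFun h2 i
          simp only [hA, hcvec]
          rw [← this]
          simp [Matrix.mulVec, dotProduct]
      | .inr (.inr i) =>
          rw [hinner]
          have := congrFun h2 i
          simp only [hA, hcvec]
          rw [← this]
          simp [Matrix.mulVec, dotProduct, Finset.sum_neg_distrib]
    · intro h
      refine ⟨fun j => ?_, fun i => ?_, funext fun i => ?_⟩
      · have := h (.inl (.inl j))
        rw [hinner] at this
        have heq : ∑ k, (if k = j then (-1:ℝ) else 0) * u k = -u j := by simp [ite_mul]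
        simp only [hA, hcvec, heq] at this
        simpa using this
      · have := h (.inl (.inr i))
        rw [hinner] at this
        simpa [hA, hcvec, Matrix.mulVec, dotProduct] using this
      · have hle := h (.inr (.inl i))
        have hge := h (.inr (.inr i))
        rw [hinner] at hle hge
        simp only [hA, hcvec] at hle hge
        have h1 : Q3.mulVec u i ≤ Q4.mulVec x i := by
          simpa [Matrix.mulVec, dotProduct] using hle
        have h2 : -(Q3.mulVec u i) ≤ -(Q4.mulVec x i) := by
          simpa [Matrix.mulVec, dotProduct, Finset.sum_neg_distrib] using hge
        linarith
  -- Lipschitz constant for the right-hand sides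
  set κ : ℝ := (∑ i, ∑ j, |Q2 i j|) + ∑ i, ∑ j, |Q4 i j| with hκ
  have hκ0 : 0 ≤ κ := by positivity
  have hrowκ2 : ∀ i : Fin a, (∑ j, |Q2 i j|) ≤ κ := by
    intro i
    have h1 : (∑ j, |Q2 i j|) ≤ ∑ i', ∑ j, |Q2 i' j| :=
      Finset.single_le_sum (f := fun i' => ∑ j, |Q2 i' j|) (fun i' _ => by positivity) (Finset.mem_univ i)
    have h2 : (0:ℝ) ≤ ∑ i', ∑ j, |Q4 i' j| := by positivity
    rw [hκ]; linarith
  have hrowκ4 : ∀ i : Fin b, (∑ j, |Q4 i j|) ≤ κ := by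
    intro i
    have h1 : (∑ j, |Q4 i j|) ≤ ∑ i', ∑ j, |Q4 i' j| :=
      Finset.single_le_sum (f := fun i' => ∑ j, |Q4 i' j|) (fun i' _ => by positivity) (Finset.mem_univ i)
    have h2 : (0:ℝ) ≤ ∑ i', ∑ j, |Q2 i' j| := by positivity
    rw [hκ]; linarith
  have hcdiff : ∀ (x x' : Fin p → ℝ) (i : ι), cvec x i - cvec x' i ≤ κ * ‖x - x'‖ := by
    intro x x' i
    have hn : (0:ℝ) ≤ ‖x - x'‖ := norm_nonneg _
    match i with
    | .inl (.inl j) => simp only [hcvec]; rw [sub_zero]; positivity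
    | .inl (.inr i) =>
        simp only [hcvec]
        have : Q2.mulVec x i - Q2.mulVec x' i = Q2.mulVec (x - x') i := by
          rw [Matrix.mulVec_sub]; rfl
        rw [this]
        calc Q2.mulVec (x - x') i ≤ |Q2.mulVec (x - x') i| := le_abs_self _
          _ ≤ (∑ j, |Q2 i j|) * ‖x - x'‖ := row_bound Q2 i (x - x')
          _ ≤ κ * ‖x - x'‖ := mul_le_mul_of_nonneg_right (hrowκ2 i) hn
    | .inr (.inl i) =>
        simp only [hcvec]
        have : Q4.mulVec x i - Q4.mulVec x' i = Q4.mulVec (x - x') i := by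
          rw [Matrix.mulVec_sub]; rfl
        rw [this]
        calc Q4.mulVec (x - x') i ≤ |Q4.mulVec (x - x') i| := le_abs_self _
          _ ≤ (∑ j, |Q4 i j|) * ‖x - x'‖ := row_bound Q4 i (x - x')
          _ ≤ κ * ‖x - x'‖ := mul_le_mul_of_nonneg_right (hrowκ4 i) hn
    | .inr (.inr i) =>
        simp only [hcvec]
        have : -Q4.mulVec x i - -Q4.mulVec x' i = -(Q4.mulVec (x - x') i) := by
          rw [Matrix.mulVec_sub]; simp only [Pi.sub_apply]; ring
        rw [this]
        calc -(Q4.mulVec (x - x') i) ≤ |Q4.mulVec (x - x') i| := neg_le_abs _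
          _ ≤ (∑ j, |Q4 i j|) * ‖x - x'‖ := row_bound Q4 i (x - x')
          _ ≤ κ * ‖x - x'‖ := mul_le_mul_of_nonneg_right (hrowκ4 i) hn
  obtain ⟨H, hH0, hHoff⟩ := hoffman_bound A
  refine ⟨H * κ, by positivity, fun x x' hne hne' => ?_⟩
  -- the one-sided approximation property
  have key : ∀ (y y' : Fin p → ℝ),
      ({u : Fin q → ℝ | 0 ≤ u ∧ Q1.mulVec u ≤ Q2.mulVec y' ∧
          Q3.mulVec u = Q4.mulVec y'}).Nonempty →
      ∀ u ∈ {u : Fin q → ℝ | 0 ≤ u ∧ Q1.mulVec u ≤ Q2.mulVec y ∧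
          Q3.mulVec u = Q4.mulVec y},
      ∃ w ∈ {u : Fin q → ℝ | 0 ≤ u ∧ Q1.mulVec u ≤ Q2.mulVec y' ∧
          Q3.mulVec u = Q4.mulVec y'},
        edist u w ≤ ENNReal.ofReal (H * κ * ‖y - y'‖) := by
    intro y y' hne' u hu
    set uE : EuclideanSpace ℝ (Fin q) := (WithLp.equiv 2 (Fin q → ℝ)).symm u with huE
    have hu' : ∀ i : ι, ⟪A i, uE⟫ ≤ cvec y i := (hmem y u).mp hu
    have hres : ∀ i : ι, ⟪A i, uE⟫ - cvec y' i ≤ κ * ‖y - y'‖ := by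
      intro i
      have := hcdiff y y' i
      have := hu' i
      linarith
    have hS'ne : ({z : EuclideanSpace ℝ (Fin q) | ∀ i, ⟪A i, z⟫ ≤ cvec y' i}).Nonempty := by
      obtain ⟨u₀, hu₀⟩ := hne'
      exact ⟨(WithLp.equiv 2 (Fin q → ℝ)).symm u₀, (hmem y' u₀).mp hu₀⟩
    obtain ⟨w, hw, hwdist⟩ := hHoff (cvec y') uE (κ * ‖y - y'‖)
      (by positivity) hres hS'ne
    set w' : Fin q → ℝ := WithLp.equiv 2 (Fin q → ℝ) w with hw'
    have hwmem : ∀ i : ι, ⟪A i, ((WithLp.equiv 2 (Fin q → ℝ)).symm w')⟫ ≤ cvec y' i := by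
      intro i
      simpa [hw'] using hw i
    refine ⟨w', (hmem y' w').mpr hwmem, ?_⟩
    rw [edist_dist]
    refine ENNReal.ofReal_le_ofReal ?_
    rw [dist_eq_norm]
    have heq : u - w' = WithLp.equiv 2 (Fin q → ℝ) (uE - w) := by
      rw [show WithLp.equiv 2 (Fin q → ℝ) (uE - w) = WithLp.equiv 2 (Fin q → ℝ) uE - WithLp.equiv 2 (Fin q → ℝ) w from rfl]
      simp [hw', huE]
    calc ‖u - w'‖ = ‖WithLp.equiv 2 (Fin q → ℝ) (uE - w)‖ := by rw [heq]
      _ ≤ ‖uE - w‖ := sup_norm_le_euclid _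
      _ ≤ H * (κ * ‖y - y'‖) := hwdist
      _ = H * κ * ‖y - y'‖ := by ring
  refine EMetric.hausdorffEdist_le_of_mem_edist (key x x' hne') ?_
  intro u hu
  obtain ⟨w, hw, hd⟩ := key x' x hne u hu
  refine ⟨w, hw, ?_⟩
  rwa [norm_sub_rev x' x] at hd

end Assembly
end

section
/- Let (D, dist) be a compact metric space, (W, 𝒲, μ) a probability space, and ξ : D × W → ℝ a function such that w ↦ ξ(p,w) is measurable for each p, |ξ(p,w)| ≤ C for all (p,w), and |ξ(p,w) − ξ(p',w)| ≤ L · dist(p,p') for all p, p' and all w. Let (W_i)_{i≥1} be a sequence of independent, identically distributed W-valued random variables with common distribution μ. Then for every ε > 0, the probability P( sup_{p ∈ D} | (1/k) Σ_{i=1}^k ξ(p, W_i) − ∫ ξ(p, w) dμ(w) | ≥ ε ) tends to 0 as k → ∞. -/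
open MeasureTheory Filter

/-- Weak law of large numbers for a single bounded measurable function. -/
lemma wlln_single {W Ω : Type*} [MeasurableSpace W]
    {mΩ : MeasurableSpace Ω} (P : Measure Ω) [IsProbabilityMeasure P]
    (μ : Measure W) [IsProbabilityMeasure μ]
    (f : W → ℝ) (C : ℝ) (hf : Measurable f) (hb : ∀ w, |f w| ≤ C)
    (Wi : ℕ → Ω → W) (hWmeas : ∀ i, Measurable (Wi i))
    (hindep : ProbabilityTheory.iIndepFun Wi P)
    (hdist : ∀ i, Measure.map (Wi i) P = μ) (ε : ℝ) (hε : 0 < ε) :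
    Tendsto (fun k : ℕ =>
      P {ω | ε ≤ |(1 / (k : ℝ)) * (∑ i ∈ Finset.range k, f (Wi i ω)) - ∫ w, f w ∂μ|})
      atTop (nhds 0) := by
  set X : ℕ → Ω → ℝ := fun i ω => f (Wi i ω) with hX
  have hXm : ∀ i, Measurable (X i) := fun i => hf.comp (hWmeas i)
  have hint : Integrable (X 0) P := by
    refine (integrable_const C).mono' (hXm 0).aestronglyMeasurable ?_
    exact ae_of_all _ fun ω => by simpa using hb (Wi 0 ω)
  have hident : ∀ i, ProbabilityTheory.IdentDistrib (X i) (X 0) P P := by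
    intro i
    refine ⟨(hXm i).aemeasurable, (hXm 0).aemeasurable, ?_⟩
    have h1 : ∀ j, Measure.map (X j) P = Measure.map f μ := by
      intro j
      have : X j = f ∘ Wi j := rfl
      rw [this, ← Measure.map_map hf (hWmeas j), hdist j]
    rw [h1, h1]
  have hpair : Pairwise (Function.onFun (ProbabilityTheory.IndepFun · · P) X) := by
    intro i j hij
    exact (hindep.comp (fun _ => f) (fun _ => hf)).indepFun hij
  have hEX : (∫ ω, X 0 ω ∂P) = ∫ w, f w ∂μ := by
    rw [← hdist 0, integral_map (hWmeas 0).aemeasurable hf.aestronglyMeasurable]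
  have hae := ProbabilityTheory.strong_law_ae_real X hint hpair hident
  have htm : TendstoInMeasure P
      (fun n ω => (∑ i ∈ Finset.range n, X i ω) / n) atTop
      (fun _ => ∫ w, f w ∂μ) := by
    refine tendstoInMeasure_of_tendsto_ae
      (fun n => ((Finset.range n).measurable_sum fun i _ => hXm i).div_const _
        |>.aestronglyMeasurable) ?_
    filter_upwards [hae] with ω hω
    rw [← hEX]
    exact hω
  refine (htm (ENNReal.ofReal ε) (ENNReal.ofReal_pos.2 hε)).congr fun k => ?_
  congr 1
  ext ω
  rw [Set.mem_setOf_eq, edist_dist, ENNReal.ofReal_le_ofReal_iff dist_nonneg]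
  simp only [Set.mem_setOf_eq, Real.dist_eq, one_div, inv_mul_eq_div, X]

/-- Uniform law of large numbers over a compact-indexed, uniformly bounded, uniformly
Lipschitz family: if `(W_i)` are i.i.d. with distribution `μ` then
`P(sup_{p ∈ D} |(1/k) Σ_{i<k} ξ(p, W_i) − ∫ ξ(p,·) dμ| ≥ ε) → 0` as `k → ∞`. -/
theorem stmt8 {D W Ω : Type*} [MetricSpace D] [CompactSpace D]
    [MeasurableSpace W]
    {mΩ : MeasurableSpace Ω} (P : Measure Ω) [IsProbabilityMeasure P]
    (μ : Measure W) [IsProbabilityMeasure μ]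
    (ξ : D → W → ℝ) (C L : ℝ)
    (hmeas : ∀ p, Measurable (ξ p))
    (hbdd : ∀ p w, |ξ p w| ≤ C)
    (hlip : ∀ p p' w, |ξ p w - ξ p' w| ≤ L * dist p p')
    (Wi : ℕ → Ω → W)
    (hWmeas : ∀ i, Measurable (Wi i))
    (hindep : ProbabilityTheory.iIndepFun Wi P)
    (hdist : ∀ i, Measure.map (Wi i) P = μ) :
    ∀ ε > (0 : ℝ), Tendsto (fun k : ℕ =>
        P {ω | ε ≤ ⨆ p : D,
          |(1 / (k : ℝ)) * (∑ i ∈ Finset.range k, ξ p (Wi i ω)) - ∫ w, ξ p w ∂μ|})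
      atTop (nhds 0) := by
  intro ε hε
  rcases isEmpty_or_nonempty D with hD | hD
  · have hemp : ∀ k : ℕ, {ω | ε ≤ ⨆ p : D,
        |(1 / (k : ℝ)) * (∑ i ∈ Finset.range k, ξ p (Wi i ω)) - ∫ w, ξ p w ∂μ|} = ∅ := by
      intro k
      ext ω
      simp only [Set.mem_setOf_eq, Set.mem_empty_iff_false, iff_false, not_le]
      rw [Real.iSup_of_isEmpty]
      exact hε
    simp only [hemp, measure_empty]
    exact tendsto_const_nhds
  -- nonempty case
  set L' : ℝ := max L 0 with hL'
  have hL'0 : 0 ≤ L' := le_max_right _ _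
  have hlip' : ∀ p p' w, |ξ p w - ξ p' w| ≤ L' * dist p p' := fun p p' w =>
    (hlip p p' w).trans (mul_le_mul_of_nonneg_right (le_max_left _ _) dist_nonneg)
  set δ : ℝ := ε / (8 * (L' + 1)) with hδdef
  have hδ : 0 < δ := div_pos hε (by positivity)
  have hLδ : L' * δ ≤ ε / 8 := by
    have : (L' + 1) * δ = ε / 8 := by
      field_simp [hδdef]
      have h : δ * (8 * (L' + 1)) = ε := by
        rw [hδdef]; exact div_mul_cancel₀ ε (by positivity)
      linear_combination h
    nlinarith [mul_le_mul_of_nonneg_right (show L' ≤ L' + 1 by linarith) hδ.le]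
  -- integrability and integral Lipschitz bound
  have hint : ∀ p, Integrable (ξ p) μ := by
    intro p
    refine (integrable_const C).mono' (hmeas p).aestronglyMeasurable ?_
    exact ae_of_all _ fun w => by simpa using hbdd p w
  have hmlip : ∀ p q : D, |(∫ w, ξ p w ∂μ) - ∫ w, ξ q w ∂μ| ≤ L' * dist p q := by
    intro p q
    rw [← integral_sub (hint p) (hint q)]
    calc |∫ w, (ξ p w - ξ q w) ∂μ| ≤ ∫ w, |ξ p w - ξ q w| ∂μ := by
          simpa using norm_integral_le_integral_norm (fun w => ξ p w - ξ q w) (μ := μ)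
      _ ≤ ∫ _, L' * dist p q ∂μ := by
          refine integral_mono ((hint p).sub (hint q)).abs (integrable_const _) ?_
          exact fun w => hlip' p q w
      _ = L' * dist p q := by simp
  -- finite cover
  obtain ⟨F, hF⟩ := IsCompact.elim_finite_subcover isCompact_univ
    (fun q : D => Metric.ball q δ) (fun q => Metric.isOpen_ball)
    (fun p _ => Set.mem_iUnion.2 ⟨p, Metric.mem_ball_self hδ⟩)
  -- key inclusion
  have hsub : ∀ k : ℕ, {ω | ε ≤ ⨆ p : D,
        |(1 / (k : ℝ)) * (∑ i ∈ Finset.range k, ξ p (Wi i ω)) - ∫ w, ξ p w ∂μ|} ⊆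
      ⋃ q ∈ F, {ω | ε / 2 ≤
        |(1 / (k : ℝ)) * (∑ i ∈ Finset.range k, ξ q (Wi i ω)) - ∫ w, ξ q w ∂μ|} := by
    intro k ω hω
    simp only [Set.mem_setOf_eq] at hω
    by_contra hcon
    simp only [Set.mem_iUnion, Set.mem_setOf_eq, not_exists, not_le] at hcon
    have hbound : ∀ p : D,
        |(1 / (k : ℝ)) * (∑ i ∈ Finset.range k, ξ p (Wi i ω)) - ∫ w, ξ p w ∂μ| ≤
          3 * ε / 4 := by
      intro p
      obtain ⟨q, hqF, hpq⟩ : ∃ q ∈ F, p ∈ Metric.ball q δ := by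
        have := hF (Set.mem_univ p)
        simpa using this
      have hd : dist p q < δ := Metric.mem_ball.1 hpq
      have hsumdiff : |(1 / (k : ℝ)) * (∑ i ∈ Finset.range k, ξ p (Wi i ω)) -
          (1 / (k : ℝ)) * (∑ i ∈ Finset.range k, ξ q (Wi i ω))| ≤ L' * δ := by
        rw [← mul_sub, ← Finset.sum_sub_distrib, abs_mul]
        have h1 : |∑ i ∈ Finset.range k, (ξ p (Wi i ω) - ξ q (Wi i ω))| ≤
            (k : ℝ) * (L' * δ) := by
          calc |∑ i ∈ Finset.range k, (ξ p (Wi i ω) - ξ q (Wi i ω))|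
              ≤ ∑ i ∈ Finset.range k, |ξ p (Wi i ω) - ξ q (Wi i ω)| :=
                Finset.abs_sum_le_sum_abs _ _
            _ ≤ ∑ _i ∈ Finset.range k, L' * δ := by
                refine Finset.sum_le_sum fun i _ => ?_
                exact (hlip' p q _).trans (mul_le_mul_of_nonneg_left hd.le hL'0)
            _ = (k : ℝ) * (L' * δ) := by simp [mul_comm]
        calc |(1 : ℝ) / k| * |∑ i ∈ Finset.range k, (ξ p (Wi i ω) - ξ q (Wi i ω))|
            ≤ (1 / (k : ℝ)) * ((k : ℝ) * (L' * δ)) := by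
              refine mul_le_mul (le_of_eq (abs_of_nonneg (by positivity))) h1
                (abs_nonneg _) (by positivity)
          _ = ((1 / (k : ℝ)) * (k : ℝ)) * (L' * δ) := by ring
          _ ≤ 1 * (L' * δ) := by
              refine mul_le_mul_of_nonneg_right ?_ (by positivity)
              rcases Nat.eq_zero_or_pos k with hk | hk
              · simp [hk]
              · rw [one_div, inv_mul_cancel₀ (by exact_mod_cast hk.ne')]
          _ = L' * δ := one_mul _
      have hmdiff : |(∫ w, ξ q w ∂μ) - ∫ w, ξ p w ∂μ| ≤ L' * δ := by
        refine (hmlip q p).trans ?_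
        rw [dist_comm]
        exact mul_le_mul_of_nonneg_left hd.le hL'0
      have hq := hcon q hqF
      calc |(1 / (k : ℝ)) * (∑ i ∈ Finset.range k, ξ p (Wi i ω)) - ∫ w, ξ p w ∂μ|
          ≤ |(1 / (k : ℝ)) * (∑ i ∈ Finset.range k, ξ p (Wi i ω)) -
              (1 / (k : ℝ)) * (∑ i ∈ Finset.range k, ξ q (Wi i ω))| +
            |(1 / (k : ℝ)) * (∑ i ∈ Finset.range k, ξ q (Wi i ω)) - ∫ w, ξ q w ∂μ| +
            |(∫ w, ξ q w ∂μ) - ∫ w, ξ p w ∂μ| := by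
            calc _ ≤ |(1 / (k : ℝ)) * (∑ i ∈ Finset.range k, ξ p (Wi i ω)) -
                  (1 / (k : ℝ)) * (∑ i ∈ Finset.range k, ξ q (Wi i ω))| +
                |(1 / (k : ℝ)) * (∑ i ∈ Finset.range k, ξ q (Wi i ω)) -
                  ∫ w, ξ p w ∂μ| := abs_sub_le _ _ _
              _ ≤ _ := by
                  rw [add_assoc]
                  gcongr
                  exact abs_sub_le _ _ _
        _ ≤ L' * δ + ε / 2 + L' * δ := by
            have hq' := hq.le
            gcongr
        _ ≤ 3 * ε / 4 := by linarith
    have : (⨆ p : D, |(1 / (k : ℝ)) * (∑ i ∈ Finset.range k, ξ p (Wi i ω)) -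
        ∫ w, ξ p w ∂μ|) ≤ 3 * ε / 4 := ciSup_le hbound
    linarith
  -- per-center WLLN and union bound
  have hterm : ∀ q : D, Tendsto (fun k : ℕ => P {ω | ε / 2 ≤
      |(1 / (k : ℝ)) * (∑ i ∈ Finset.range k, ξ q (Wi i ω)) - ∫ w, ξ q w ∂μ|})
      atTop (nhds 0) := fun q =>
    wlln_single P μ (ξ q) C (hmeas q) (hbdd q) Wi hWmeas hindep hdist (ε / 2) (by linarith)
  have hsumtend : Tendsto (fun k : ℕ => ∑ q ∈ F, P {ω | ε / 2 ≤
      |(1 / (k : ℝ)) * (∑ i ∈ Finset.range k, ξ q (Wi i ω)) - ∫ w, ξ q w ∂μ|})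
      atTop (nhds 0) := by
    have := tendsto_finset_sum F (fun q _ => hterm q)
    simpa using this
  refine tendsto_of_tendsto_of_tendsto_of_le_of_le tendsto_const_nhds hsumtend
    (fun k => bot_le) (fun k => ?_)
  calc P {ω | ε ≤ ⨆ p : D,
        |(1 / (k : ℝ)) * (∑ i ∈ Finset.range k, ξ p (Wi i ω)) - ∫ w, ξ p w ∂μ|}
      ≤ P (⋃ q ∈ F, {ω | ε / 2 ≤
        |(1 / (k : ℝ)) * (∑ i ∈ Finset.range k, ξ q (Wi i ω)) - ∫ w, ξ q w ∂μ|}) :=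
        measure_mono (hsub k)
    _ ≤ ∑ q ∈ F, P {ω | ε / 2 ≤
        |(1 / (k : ℝ)) * (∑ i ∈ Finset.range k, ξ q (Wi i ω)) - ∫ w, ξ q w ∂μ|} :=
        measure_biUnion_finset_le _ _
end

section
/- Let X be a compact metric space, U = (Fin q → ℝ), Γ : X → Set U an L_Γ-Lipschitz (in Hausdorff metric) correspondence with nonempty compact values contained in a fixed compact set, c ∈ ℝ^q, f : X × U × W → X' a map satisfying ‖f(x,u,w) − f(x',u',w)‖ ≤ ‖x−x'‖_∞ + ‖u−u'‖_∞ for all w, μ a probability measure on W, and v : X' → ℝ bounded and Lipschitz. Let (W_i)_{i≥1} be i.i.d. W-valued random variables with distribution μ, and define the random functions Ĥᵏ(v)(x) = inf_{u ∈ Γ(x)} ( c·u + (1/k) Σ_{i=1}^k v(f(x,u,W_i)) ) and H(v)(x) = inf_{u ∈ Γ(x)} ( c·u + ∫ v(f(x,u,w)) dμ(w) ). Then for every ε > 0, P( sup_{x ∈ X} |Ĥᵏ(v)(x) − H(v)(x)| ≥ ε ) → 0 as k → ∞. -/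
open MeasureTheory Filter


set_option maxHeartbeats 1000000

lemma abs_sub_bound {a b a' b' t1 t2 : ℝ} (h1 : |a - a'| ≤ t1) (h2 : |b - b'| ≤ t2) :
    |a - b| ≤ |a' - b'| + (t1 + t2) := by
  have : a - b = (a' - b') + ((a - a') - (b - b')) := by ring
  rw [this]
  calc |(a' - b') + ((a - a') - (b - b'))| ≤ |a' - b'| + |(a - a') - (b - b')| := abs_add_le _ _
    _ ≤ |a' - b'| + (|a - a'| + |b - b'|) := by gcongr; exact abs_sub _ _
    _ ≤ |a' - b'| + (t1 + t2) := by linarith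

lemma avg_abs_le (k : ℕ) (a : ℕ → ℝ) {B : ℝ} (hB : 0 ≤ B)
    (h : ∀ i < k, |a i| ≤ B) :
    |(1 / (k : ℝ)) * ∑ i ∈ Finset.range k, a i| ≤ B := by
  rcases Nat.eq_zero_or_pos k with rfl | hk
  · simp [hB]
  · have hk' : (0:ℝ) < k := by exact_mod_cast hk
    rw [abs_mul, abs_of_nonneg (by positivity : (0:ℝ) ≤ 1/(k:ℝ))]
    calc 1/(k:ℝ) * |∑ i ∈ Finset.range k, a i|
        ≤ 1/(k:ℝ) * ∑ i ∈ Finset.range k, |a i| := by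
          gcongr; exact Finset.abs_sum_le_sum_abs _ _
      _ ≤ 1/(k:ℝ) * ∑ _i ∈ Finset.range k, B := by
          gcongr with i hi
          exact h i (Finset.mem_range.1 hi)
      _ = B := by rw [Finset.sum_const, Finset.card_range, nsmul_eq_mul]; field_simp

lemma abs_sInf_sub_sInf_le {α : Type*} {S : Set α} (hS : S.Nonempty) {g h : α → ℝ}
    (hg : BddBelow (g '' S)) (hh : BddBelow (h '' S)) {t : ℝ}
    (hb : ∀ u ∈ S, |g u - h u| ≤ t) :
    |sInf (g '' S) - sInf (h '' S)| ≤ t := by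
  have key : ∀ (g' h' : α → ℝ), BddBelow (g' '' S) →
      (∀ u ∈ S, g' u - h' u ≤ t) → sInf (g' '' S) - t ≤ sInf (h' '' S) := by
    intro g' h' hg' hb'
    refine le_csInf (hS.image h') ?_
    rintro b ⟨u, hu, rfl⟩
    have h1 : sInf (g' '' S) ≤ g' u := csInf_le hg' ⟨u, hu, rfl⟩
    have h2 := hb' u hu
    linarith
  have h1 := key g h hg (fun u hu => (abs_le.1 (hb u hu)).2)
  have h2 := key h g hh (fun u hu => by
    have := (abs_le.1 (hb u hu)).1; linarith)
  rw [abs_sub_le_iff]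
  constructor <;> linarith

lemma point_tendsto {W Ω : Type*} [MeasurableSpace W] {mΩ : MeasurableSpace Ω}
    (P : Measure Ω) [IsProbabilityMeasure P] (μ : Measure W) [IsProbabilityMeasure μ]
    (φ : W → ℝ) (hφ : Measurable φ) {M : ℝ} (hM : ∀ w, |φ w| ≤ M)
    (Wi : ℕ → Ω → W) (hWmeas : ∀ i, Measurable (Wi i))
    (hindep : ProbabilityTheory.iIndepFun Wi P)
    (hdist : ∀ i, Measure.map (Wi i) P = μ) {ε : ℝ} (hε : 0 < ε) :
    Tendsto (fun k : ℕ =>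
      P {ω | ε ≤ |(∑ i ∈ Finset.range k, φ (Wi i ω)) / k - ∫ w, φ w ∂μ|})
      atTop (nhds 0) := by
  set Y : ℕ → Ω → ℝ := fun i ω => φ (Wi i ω) with hY
  have hYmeas : ∀ i, Measurable (Y i) := fun i => hφ.comp (hWmeas i)
  have hint : Integrable (Y 0) P := by
    refine Integrable.mono' (integrable_const M) (hYmeas 0).aestronglyMeasurable
      (ae_of_all _ fun ω => ?_)
    simpa [Real.norm_eq_abs] using hM (Wi 0 ω)
  have hpind : Pairwise (Function.onFun (ProbabilityTheory.IndepFun · · P) Y) := by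
    intro i j hij
    exact (hindep.indepFun hij).comp hφ hφ
  have hident : ∀ i, ProbabilityTheory.IdentDistrib (Y i) (Y 0) P P := by
    intro i
    refine ⟨(hYmeas i).aemeasurable, (hYmeas 0).aemeasurable, ?_⟩
    rw [hY]
    show Measure.map (φ ∘ Wi i) P = Measure.map (φ ∘ Wi 0) P
    rw [← Measure.map_map hφ (hWmeas i), ← Measure.map_map hφ (hWmeas 0), hdist, hdist]
  have hslln := ProbabilityTheory.strong_law_ae_real Y hint hpind hident
  have hmean : ∫ x, Y 0 x ∂P = ∫ w, φ w ∂μ := by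
    rw [← hdist 0, integral_map (hWmeas 0).aemeasurable hφ.aestronglyMeasurable]
  rw [hmean] at hslln
  have htm : TendstoInMeasure P (fun k ω => (∑ i ∈ Finset.range k, Y i ω) / k) atTop
      (fun _ => ∫ w, φ w ∂μ) := by
    refine tendstoInMeasure_of_tendsto_ae (fun n => ?_) hslln
    exact ((Finset.measurable_sum _ fun i _ => hYmeas i).div_const _).aestronglyMeasurable
  have := tendstoInMeasure_iff_dist.1 htm ε hε
  simpa [Real.dist_eq] using this


/-- Convergence in probability of the empirical Bellman operator to the true Bellman
operator, uniformly over a compact state space: under Lipschitz hypotheses on `Γ`,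
`f`, and `v`, for every `ε > 0`,
`P(sup_x |Ĥᵏ(v)(x) − H(v)(x)| ≥ ε) → 0` as the sample size `k → ∞`. -/
theorem stmt9 {X X' W Ω : Type*} [MetricSpace X] [CompactSpace X] [MetricSpace X']
    [MeasurableSpace X'] [BorelSpace X'] [MeasurableSpace W]
    {mΩ : MeasurableSpace Ω} (P : Measure Ω) [IsProbabilityMeasure P]
    (μ : Measure W) [IsProbabilityMeasure μ]
    (q : ℕ)
    (Γ : X → Set (Fin q → ℝ))
    (hΓne : ∀ x, (Γ x).Nonempty)
    (hΓcpt : ∀ x, IsCompact (Γ x))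
    (K : Set (Fin q → ℝ)) (hK : IsCompact K) (hΓK : ∀ x, Γ x ⊆ K)
    (LΓ : ℝ)
    (hΓlip : ∀ x x', Metric.hausdorffDist (Γ x) (Γ x') ≤ LΓ * dist x x')
    (c : Fin q → ℝ)
    (f : X → (Fin q → ℝ) → W → X')
    (hf : ∀ (x x' : X) (u u' : Fin q → ℝ) (w : W),
      dist (f x u w) (f x' u' w) ≤ dist x x' + ‖u - u'‖)
    (hfmeas : ∀ x u, Measurable fun w => f x u w)
    (v : X' → ℝ) (Mv Lv : ℝ)
    (hvb : ∀ y, |v y| ≤ Mv)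
    (hvlip : ∀ y y', |v y - v y'| ≤ Lv * dist y y')
    (Wi : ℕ → Ω → W)
    (hWmeas : ∀ i, Measurable (Wi i))
    (hindep : ProbabilityTheory.iIndepFun Wi P)
    (hdist : ∀ i, Measure.map (Wi i) P = μ) :
    ∀ ε > (0 : ℝ), Tendsto (fun k : ℕ =>
        P {ω | ε ≤ ⨆ x : X,
          |sInf ((fun u => (∑ i, c i * u i) +
              (1 / (k : ℝ)) * ∑ i ∈ Finset.range k, v (f x u (Wi i ω))) '' Γ x) -
            sInf ((fun u => (∑ i, c i * u i) + ∫ w, v (f x u w) ∂μ) '' Γ x)|})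
      atTop (nhds 0) := by
  intro ε hε
  rcases isEmpty_or_nonempty X with hX | hX
  · have heq : ∀ k : ℕ, {ω : Ω | ε ≤ ⨆ x : X,
          |sInf ((fun u => (∑ i, c i * u i) +
              (1 / (k : ℝ)) * ∑ i ∈ Finset.range k, v (f x u (Wi i ω))) '' Γ x) -
            sInf ((fun u => (∑ i, c i * u i) + ∫ w, v (f x u w) ∂μ) '' Γ x)|} = ∅ := by
      intro k
      ext ω
      simp [Real.iSup_of_isEmpty, not_le.2 hε]
    simp only [heq, measure_empty]
    exact tendsto_const_nhds
  -- main case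
  set L : ℝ := max Lv 0 with hLdef
  have hL0 : 0 ≤ L := le_max_right _ _
  have hvlip' : ∀ y y', |v y - v y'| ≤ L * dist y y' := fun y y' =>
    (hvlip y y').trans (mul_le_mul_of_nonneg_right (le_max_left _ _) dist_nonneg)
  set M : ℝ := max Mv 0 with hMdef
  have hM0 : 0 ≤ M := le_max_right _ _
  have hvb' : ∀ y, |v y| ≤ M := fun y => (hvb y).trans (le_max_left _ _)
  have hvcont : Continuous v := by
    have hlw : LipschitzWith (Real.toNNReal L) v := by
      refine LipschitzWith.of_dist_le_mul fun y y' => ?_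
      rw [Real.dist_eq, Real.coe_toNNReal L hL0]
      exact hvlip' y y'
    exact hlw.continuous
  have hφmeas : ∀ (x : X) (u : Fin q → ℝ), Measurable fun w => v (f x u w) :=
    fun x u => hvcont.measurable.comp (hfmeas x u)
  have hφint : ∀ (x : X) (u : Fin q → ℝ), Integrable (fun w => v (f x u w)) μ := by
    intro x u
    refine Integrable.mono' (integrable_const M) (hφmeas x u).aestronglyMeasurable
      (ae_of_all _ fun w => ?_)
    simpa [Real.norm_eq_abs] using hvb' (f x u w)
  set m : X → (Fin q → ℝ) → ℝ := fun x u => ∫ w, v (f x u w) ∂μ with hmdef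
  have hmb : ∀ x u, |m x u| ≤ M := by
    intro x u
    calc |m x u| = ‖∫ w, v (f x u w) ∂μ‖ := by rw [Real.norm_eq_abs]
      _ ≤ ∫ w, ‖v (f x u w)‖ ∂μ := norm_integral_le_integral_norm _
      _ ≤ ∫ _w, M ∂μ := by
          refine integral_mono (hφint x u).norm (integrable_const M) fun w => ?_
          simpa [Real.norm_eq_abs] using hvb' (f x u w)
      _ = M := by simp
  have hterm : ∀ (x x' : X) (u u' : Fin q → ℝ) (w : W),
      |v (f x u w) - v (f x' u' w)| ≤ L * (dist x x' + ‖u - u'‖) := by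
    intro x x' u u' w
    refine (hvlip' _ _).trans ?_
    exact mul_le_mul_of_nonneg_left (hf x x' u u' w) hL0
  have hmlip : ∀ (x x' : X) (u u' : Fin q → ℝ),
      |m x u - m x' u'| ≤ L * (dist x x' + ‖u - u'‖) := by
    intro x x' u u'
    have hsub : m x u - m x' u' = ∫ w, (v (f x u w) - v (f x' u' w)) ∂μ :=
      (integral_sub (hφint x u) (hφint x' u')).symm
    rw [hsub]
    calc |∫ w, (v (f x u w) - v (f x' u' w)) ∂μ|
        = ‖∫ w, (v (f x u w) - v (f x' u' w)) ∂μ‖ := (Real.norm_eq_abs _).symm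
      _ ≤ ∫ w, ‖v (f x u w) - v (f x' u' w)‖ ∂μ := norm_integral_le_integral_norm _
      _ ≤ ∫ _w, L * (dist x x' + ‖u - u'‖) ∂μ := by
          refine integral_mono ((hφint x u).sub (hφint x' u')).norm (integrable_const _)
            fun w => ?_
          simpa [Real.norm_eq_abs] using hterm x x' u u' w
      _ = L * (dist x x' + ‖u - u'‖) := by simp
  -- bound on the linear cost on K
  obtain ⟨R, hR⟩ := hK.exists_bound_of_continuousOn
    (Continuous.continuousOn (by continuity : Continuous fun u : Fin q → ℝ => ∑ i, c i * u i))
  have hRabs : ∀ u ∈ K, |∑ i, c i * u i| ≤ R := by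
    intro u hu; simpa [Real.norm_eq_abs] using hR u hu
  -- the finite net
  set δ : ℝ := ε / (16 * (L + 1)) with hδdef
  have hδ : 0 < δ := by positivity
  have hD : IsCompact ((Set.univ : Set X) ×ˢ K) := isCompact_univ.prod hK
  obtain ⟨t, hts, htfin, htcov⟩ := totallyBounded_iff_subset.1 hD.totallyBounded
    {p | dist p.1 p.2 < δ} (Metric.dist_mem_uniformity hδ)
  -- the bad events
  set E : (X × (Fin q → ℝ)) → ℕ → Set Ω := fun p k =>
    {ω | ε / 2 ≤ |(∑ i ∈ Finset.range k, v (f p.1 p.2 (Wi i ω))) / ↑k - m p.1 p.2|} with hEdef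
  have hEtend : ∀ p : X × (Fin q → ℝ), Tendsto (fun k => P (E p k)) atTop (nhds 0) := by
    intro p
    exact point_tendsto P μ (fun w => v (f p.1 p.2 w)) (hφmeas p.1 p.2)
      (fun w => hvb' (f p.1 p.2 w)) Wi hWmeas hindep hdist (half_pos hε)
  -- inclusion
  have hsub : ∀ k : ℕ, {ω : Ω | ε ≤ ⨆ x : X,
          |sInf ((fun u => (∑ i, c i * u i) +
              (1 / (k : ℝ)) * ∑ i ∈ Finset.range k, v (f x u (Wi i ω))) '' Γ x) -
            sInf ((fun u => (∑ i, c i * u i) + ∫ w, v (f x u w) ∂μ) '' Γ x)|}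
        ⊆ ⋃ p ∈ t, E p k := by
    intro k ω hω
    by_contra hc
    simp only [Set.mem_iUnion, not_exists] at hc
    have hc' : ∀ p ∈ t, |(∑ i ∈ Finset.range k, v (f p.1 p.2 (Wi i ω))) / ↑k - m p.1 p.2| < ε / 2 := by
      intro p hp
      have := hc p hp
      simpa [hEdef, not_le] using this
    -- deterministic bound
    set A : X → (Fin q → ℝ) → ℝ := fun x u =>
      (1 / (k : ℝ)) * ∑ i ∈ Finset.range k, v (f x u (Wi i ω)) - m x u with hAdef
    have hAbound : ∀ (x : X) (u : Fin q → ℝ), u ∈ Γ x → |A x u| ≤ 3 * ε / 4 := by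
      intro x u hu
      have hxu : (x, u) ∈ (Set.univ : Set X) ×ˢ K := ⟨Set.mem_univ x, hΓK x hu⟩
      obtain ⟨p, hp, hdp⟩ := Set.mem_iUnion₂.1 (htcov hxu)
      have hdp' : dist ((x, u) : X × (Fin q → ℝ)) p < δ := hdp
      rw [Prod.dist_eq] at hdp'
      have hdX : dist x p.1 < δ := lt_of_le_of_lt (le_max_left _ _) hdp'
      have hdU : ‖u - p.2‖ < δ := by
        have := lt_of_le_of_lt (le_max_right _ _) hdp'
        rwa [dist_eq_norm] at this
      have havgdiff : |(1 / (k : ℝ)) * ∑ i ∈ Finset.range k, v (f x u (Wi i ω))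
          - (1 / (k : ℝ)) * ∑ i ∈ Finset.range k, v (f p.1 p.2 (Wi i ω))| ≤ L * (2 * δ) := by
        rw [← mul_sub, ← Finset.sum_sub_distrib]
        refine avg_abs_le k _ (by positivity) fun i _ => ?_
        refine (hterm x p.1 u p.2 (Wi i ω)).trans ?_
        have : dist x p.1 + ‖u - p.2‖ ≤ 2 * δ := by linarith
        exact mul_le_mul_of_nonneg_left this hL0
      have hmdiff : |m x u - m p.1 p.2| ≤ L * (2 * δ) := by
        refine (hmlip x p.1 u p.2).trans ?_
        have : dist x p.1 + ‖u - p.2‖ ≤ 2 * δ := by linarith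
        exact mul_le_mul_of_nonneg_left this hL0
      have hAp : |A p.1 p.2| < ε / 2 := by
        have h1 := hc' p hp
        have : (1 / (k : ℝ)) * ∑ i ∈ Finset.range k, v (f p.1 p.2 (Wi i ω))
            = (∑ i ∈ Finset.range k, v (f p.1 p.2 (Wi i ω))) / ↑k := by ring
        rw [hAdef]; simp only [this]; exact h1
      have hLδ : L * (2 * δ) + L * (2 * δ) ≤ ε / 4 := by
        have hL1 : (0:ℝ) < L + 1 := by linarith
        have h1 : L * (2 * δ) ≤ (L + 1) * (2 * δ) := by nlinarith [hδ.le]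
        have h2 : (L + 1) * (2 * δ) + (L + 1) * (2 * δ) = ε / 4 := by
          rw [hδdef]; field_simp; ring
        linarith
      have hsplit : |A x u| ≤ |A p.1 p.2| + (L * (2 * δ) + L * (2 * δ)) :=
        abs_sub_bound havgdiff hmdiff
      linarith
    -- bddBelow facts
    have hbddg : ∀ x : X, BddBelow ((fun u => (∑ i, c i * u i) +
        (1 / (k : ℝ)) * ∑ i ∈ Finset.range k, v (f x u (Wi i ω))) '' Γ x) := by
      intro x
      refine ⟨-(R + M), ?_⟩
      rintro b ⟨u, hu, rfl⟩
      have h1 : |∑ i, c i * u i| ≤ R := hRabs u (hΓK x hu)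
      have h2 : |(1 / (k : ℝ)) * ∑ i ∈ Finset.range k, v (f x u (Wi i ω))| ≤ M :=
        avg_abs_le k _ hM0 fun i _ => hvb' _
      have := abs_le.1 h1; have := abs_le.1 h2
      simp only [lowerBounds, Set.mem_setOf_eq]
      linarith [(abs_le.1 h1).1, (abs_le.1 h2).1]
    have hbddh : ∀ x : X, BddBelow ((fun u => (∑ i, c i * u i) + m x u) '' Γ x) := by
      intro x
      refine ⟨-(R + M), ?_⟩
      rintro b ⟨u, hu, rfl⟩
      have h1 : |∑ i, c i * u i| ≤ R := hRabs u (hΓK x hu)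
      have h2 := abs_le.1 (hmb x u)
      simp only [lowerBounds, Set.mem_setOf_eq]
      linarith [(abs_le.1 h1).1]
    have hxbound : ∀ x : X,
        |sInf ((fun u => (∑ i, c i * u i) +
            (1 / (k : ℝ)) * ∑ i ∈ Finset.range k, v (f x u (Wi i ω))) '' Γ x) -
          sInf ((fun u => (∑ i, c i * u i) + ∫ w, v (f x u w) ∂μ) '' Γ x)| ≤ 3 * ε / 4 := by
      intro x
      refine abs_sInf_sub_sInf_le (hΓne x) (hbddg x) (hbddh x) fun u hu => ?_
      have : ((∑ i, c i * u i) + (1 / (k : ℝ)) * ∑ i ∈ Finset.range k, v (f x u (Wi i ω)))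
          - ((∑ i, c i * u i) + ∫ w, v (f x u w) ∂μ) = A x u := by rw [hAdef, hmdef]; ring
      rw [this]
      exact hAbound x u hu
    have hsup := ciSup_le hxbound
    have hωin : ε ≤ _ := hω
    have : ε ≤ 3 * ε / 4 := le_trans hωin hsup
    linarith
  -- putting it together
  have hmono : ∀ k : ℕ, P {ω : Ω | ε ≤ ⨆ x : X,
          |sInf ((fun u => (∑ i, c i * u i) +
              (1 / (k : ℝ)) * ∑ i ∈ Finset.range k, v (f x u (Wi i ω))) '' Γ x) -
            sInf ((fun u => (∑ i, c i * u i) + ∫ w, v (f x u w) ∂μ) '' Γ x)|}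
        ≤ ∑ p ∈ htfin.toFinset, P (E p k) := by
    intro k
    refine (measure_mono (hsub k)).trans ?_
    have hUeq : ⋃ p ∈ t, E p k = ⋃ p ∈ htfin.toFinset, E p k := by
      ext ω; simp [Set.Finite.mem_toFinset]
    rw [hUeq]
    exact measure_biUnion_finset_le _ _
  have hsum : Tendsto (fun k => ∑ p ∈ htfin.toFinset, P (E p k)) atTop (nhds 0) := by
    have := tendsto_finset_sum htfin.toFinset (fun p _ => hEtend p)
    simpa using this
  exact tendsto_of_tendsto_of_tendsto_of_le_of_le tendsto_const_nhds hsum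
    (fun k => zero_le) hmono
end

section
/- Let T be a natural number, let X and U be compact metric spaces, let Θ be a compact metric space (the parameter space), and let W_s be compact metric spaces with finite Borel measures λ_s. Assume: (i) for each s, c̃_s : Θ → ℝ^q is continuous (so (u,θ) ↦ c̃_s(θ)·u is jointly continuous on U × Θ); (ii) β_s : W_s × Θ → [0, ∞) is continuous and bounded with ∫ β_s(w,θ) dλ_s(w) = 1 for every θ; (iii) the transition maps f_s : X × U × W_s → X are jointly continuous; (iv) Γ : X → Set U is a correspondence with nonempty compact values continuous in the Hausdorff metric. Define ṽ_{T+1} ≡ 0 and, for s = T down to 1, ṽ_s(x, θ) = inf_{u ∈ Γ(x)} ( c̃_s(θ)·u + ∫_{W_s} ṽ_{s+1}(f_s(x,u,w), θ) · β_s(w,θ) dλ_s(w) ). Then for every s ∈ {1,...,T+1}, ṽ_s is jointly continuous on X × Θ. -/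
open MeasureTheory

/-- Continuity of the marginal (infimum over a continuous compact-valued
correspondence) of a jointly continuous function. -/
lemma marginal_cont {X Θ : Type*} [MetricSpace X] [CompactSpace X]
    [MetricSpace Θ] [CompactSpace Θ] {q : ℕ}
    {K : Set (Fin q → ℝ)} (hK : IsCompact K)
    {Γ : X → Set (Fin q → ℝ)}
    (hΓne : ∀ x, (Γ x).Nonempty)
    (hΓcpt : ∀ x, IsCompact (Γ x))
    (hΓK : ∀ x, Γ x ⊆ K)
    (hΓcont : Continuous fun x =>
      (⟨⟨Γ x, hΓcpt x⟩, hΓne x⟩ : TopologicalSpace.NonemptyCompacts (Fin q → ℝ)))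
    {g : X × (Fin q → ℝ) × Θ → ℝ} (hg : Continuous g) :
    Continuous fun p : X × Θ => sInf ((fun u => g (p.1, u, p.2)) '' Γ p.1) := by
  set F : X × Θ → ℝ := fun p => sInf ((fun u => g (p.1, u, p.2)) '' Γ p.1) with hF
  have hgx : ∀ (x : X) (θ : Θ), Continuous fun u => g (x, u, θ) := fun x θ =>
    hg.comp (continuous_const.prodMk (continuous_id.prodMk continuous_const))
  have hSc : IsCompact ((Set.univ : Set X) ×ˢ K ×ˢ (Set.univ : Set Θ)) :=
    isCompact_univ.prod (hK.prod isCompact_univ)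
  have hmem : ∀ (x : X) (u : Fin q → ℝ) (θ : Θ), u ∈ Γ x →
      (x, u, θ) ∈ (Set.univ : Set X) ×ˢ K ×ˢ (Set.univ : Set Θ) := by
    intro x u θ hu
    exact ⟨Set.mem_univ _, hΓK x hu, Set.mem_univ _⟩
  rw [Metric.continuous_iff]
  intro p ε εpos
  -- uniform continuity of g on the compact slab
  have hug := hSc.uniformContinuousOn_of_continuous hg.continuousOn
  rw [Metric.uniformContinuousOn_iff] at hug
  obtain ⟨δ, δpos, hδ⟩ := hug (ε / 2) (by linarith)
  -- uniform continuity of the correspondence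
  have huΓ := CompactSpace.uniformContinuous_of_continuous hΓcont
  rw [Metric.uniformContinuous_iff] at huΓ
  obtain ⟨δ', δ'pos, hδ'⟩ := huΓ δ δpos
  refine ⟨min δ δ', lt_min δpos δ'pos, ?_⟩
  have key : ∀ a b : X × Θ, dist a b < min δ δ' → F b < F a + ε / 2 := by
    rintro ⟨x, θ⟩ ⟨x', θ'⟩ hab
    have hxx' : dist x x' < min δ δ' :=
      lt_of_le_of_lt (le_max_left _ _) (by rwa [Prod.dist_eq] at hab)
    have hθθ' : dist θ θ' < min δ δ' :=
      lt_of_le_of_lt (le_max_right _ _) (by rwa [Prod.dist_eq] at hab)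
    -- a minimizer of g (x, ·, θ) on Γ x
    obtain ⟨u, hu, humin⟩ := (hΓcpt x).exists_isMinOn (hΓne x) (hgx x θ).continuousOn
    have hFa : F (x, θ) = g (x, u, θ) := by
      refine le_antisymm (csInf_le ?_ (Set.mem_image_of_mem _ hu)) (le_csInf ?_ ?_)
      · exact ((hΓcpt x).image (hgx x θ)).bddBelow
      · exact (hΓne x).image _
      · rintro b ⟨u', hu', rfl⟩
        exact humin hu'
    -- transfer the minimizer to Γ x'
    have hfin : EMetric.hausdorffEdist (Γ x) (Γ x') ≠ ⊤ :=
      Metric.hausdorffEdist_ne_top_of_nonempty_of_bounded (hΓne x) (hΓne x')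
        (hΓcpt x).isBounded (hΓcpt x').isBounded
    have hhd : Metric.hausdorffDist (Γ x) (Γ x') < δ := by
      have := hδ' (lt_of_lt_of_le hxx' (min_le_right _ _)) -- dist of NonemptyCompacts
      rwa [Metric.NonemptyCompacts.dist_eq] at this
    obtain ⟨u', hu', huu'⟩ := Metric.exists_dist_lt_of_hausdorffDist_lt hu hhd hfin
    have hFb : F (x', θ') ≤ g (x', u', θ') :=
      csInf_le ((hΓcpt x').image (hgx x' θ')).bddBelow (Set.mem_image_of_mem _ hu')
    have hclose : dist (g (x, u, θ)) (g (x', u', θ')) < ε / 2 := by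
      refine hδ _ (hmem x u θ hu) _ (hmem x' u' θ' hu') ?_
      rw [Prod.dist_eq, Prod.dist_eq]
      refine max_lt (lt_of_lt_of_le hxx' (min_le_left _ _))
        (max_lt huu' (lt_of_lt_of_le hθθ' (min_le_left _ _)))
    have : g (x', u', θ') < g (x, u, θ) + ε / 2 := by
      have := abs_lt.mp (by rwa [Real.dist_eq] at hclose)
      linarith [this.1]
    calc F (x', θ') ≤ g (x', u', θ') := hFb
      _ < g (x, u, θ) + ε / 2 := this
      _ = F (x, θ) + ε / 2 := by rw [hFa]
  intro b hb
  have h1 := key p b (by rwa [dist_comm] at hb)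
  have h2 := key b p hb
  rw [Real.dist_eq, abs_lt]
  constructor <;> linarith

/-- Joint continuity (robustness) of the parameterized value functions of the
EV-charging dynamic program: under continuity of the cost vectors `c̃_s`, of the
arrival densities `β_s` (with `∫ β_s(·,θ) dλ_s = 1`), of the transition maps `f_s`,
and of the correspondence `Γ` in the Hausdorff metric, every value function
`ṽ_s`, `1 ≤ s ≤ T+1`, is jointly continuous on `X × Θ`. -/
theorem stmt14 {X Θ : Type*} [MetricSpace X] [CompactSpace X]
    [MetricSpace Θ] [CompactSpace Θ]
    (q T : ℕ)
    (W : ℕ → Type) [∀ s, MetricSpace (W s)] [∀ s, CompactSpace (W s)]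
    [∀ s, MeasurableSpace (W s)] [∀ s, BorelSpace (W s)]
    (lam : ∀ s, Measure (W s)) [∀ s, IsFiniteMeasure (lam s)]
    (K : Set (Fin q → ℝ)) (hK : IsCompact K)
    (Γ : X → Set (Fin q → ℝ))
    (hΓne : ∀ x, (Γ x).Nonempty)
    (hΓcpt : ∀ x, IsCompact (Γ x))
    (hΓK : ∀ x, Γ x ⊆ K)
    (hΓcont : Continuous fun x =>
      (⟨⟨Γ x, hΓcpt x⟩, hΓne x⟩ : TopologicalSpace.NonemptyCompacts (Fin q → ℝ)))
    (ctil : ℕ → Θ → Fin q → ℝ)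
    (hc : ∀ s, Continuous (ctil s))
    (β : ∀ s, W s × Θ → ℝ)
    (hβc : ∀ s, Continuous (β s))
    (hβ0 : ∀ s w θ, 0 ≤ β s (w, θ))
    (hβb : ∀ s, ∃ C, ∀ w θ, β s (w, θ) ≤ C)
    (hβ1 : ∀ s θ, ∫ w, β s (w, θ) ∂lam s = 1)
    (f : ∀ s, X × (Fin q → ℝ) × W s → X)
    (hf : ∀ s, Continuous (f s))
    (v : ℕ → X → Θ → ℝ)
    (hvT : ∀ x θ, v (T + 1) x θ = 0)
    (hv : ∀ s, 1 ≤ s → s ≤ T → ∀ x θ,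
      v s x θ = sInf ((fun u => (∑ i, ctil s θ i * u i) +
        ∫ w, v (s + 1) (f s (x, u, w)) θ * β s (w, θ) ∂lam s) '' Γ x)) :
    ∀ s, 1 ≤ s → s ≤ T + 1 → Continuous fun p : X × Θ => v s p.1 p.2 := by
  suffices h : ∀ n s, s + n = T + 1 → 1 ≤ s →
      Continuous fun p : X × Θ => v s p.1 p.2 by
    intro s h1 h2
    exact h (T + 1 - s) s (by omega) h1
  intro n
  induction n with
  | zero =>
    intro s hs _
    have : s = T + 1 := by omega
    subst this
    simp only [hvT]
    exact continuous_const
  | succ n ih =>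
    intro s hs hs1
    have hIH : Continuous fun p : X × Θ => v (s + 1) p.1 p.2 :=
      ih (s + 1) (by omega) (by omega)
    have hsT : s ≤ T := by omega
    -- the joint objective function
    set g : X × (Fin q → ℝ) × Θ → ℝ := fun p =>
      (∑ i, ctil s p.2.2 i * p.2.1 i) +
        ∫ w, v (s + 1) (f s (p.1, p.2.1, w)) p.2.2 * β s (w, p.2.2) ∂lam s with hgdef
    have hg : Continuous g := by
      apply Continuous.add
      · apply continuous_finset_sum
        intro i _
        exact ((continuous_apply i).comp ((hc s).comp
          (continuous_snd.comp continuous_snd))).mul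
          ((continuous_apply i).comp (continuous_fst.comp continuous_snd))
      · have : Continuous fun p : X × (Fin q → ℝ) × Θ =>
            ∫ w in (Set.univ : Set (W s)),
              v (s + 1) (f s (p.1, p.2.1, w)) p.2.2 * β s (w, p.2.2) ∂lam s := by
          apply continuous_parametric_integral_of_continuous _ isCompact_univ
          have h1 : Continuous fun r : (X × (Fin q → ℝ) × Θ) × W s =>
              v (s + 1) (f s (r.1.1, r.1.2.1, r.2)) r.1.2.2 :=
            hIH.comp (((hf s).comp ((continuous_fst.comp continuous_fst).prodMk
              (((continuous_fst.comp continuous_snd).comp continuous_fst).prodMk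
                continuous_snd))).prodMk
              ((continuous_snd.comp continuous_snd).comp continuous_fst))
          have h2 : Continuous fun r : (X × (Fin q → ℝ) × Θ) × W s =>
              β s (r.2, r.1.2.2) :=
            (hβc s).comp (continuous_snd.prodMk
              ((continuous_snd.comp continuous_snd).comp continuous_fst))
          exact h1.mul h2
        simpa [Measure.restrict_univ] using this
    have : (fun p : X × Θ => v s p.1 p.2) =
        fun p : X × Θ => sInf ((fun u => g (p.1, u, p.2)) '' Γ p.1) := by
      funext p
      exact hv s hs1 hsT p.1 p.2
    rw [this]
    exact marginal_cont hK hΓne hΓcpt hΓK hΓcont hg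
end
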